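/- Let G be a finite group and suppose f : G → {0,1} can be computed by a coset decision tree with m leaves. Then ‖f‖_{A(G)} ≤ m·2^m. -/

import Mathlib

open scoped BigOperators Pointwise Classical ComplexOrder
open Matrix

local notation "⟪" x ", " y "⟫" => @inner ℂ _ _ x y

lemma sum_mulVec' {n ι : Type*} [Fintype n] [Fintype ι] (M : ι → Matrix n n ℂ) (v : n → ℂ) :
    (∑ i, M i) *ᵥ v = ∑ i, (M i) *ᵥ v := by
  ext a
  simp only [Matrix.mulVec, dotProduct, Matrix.sum_apply, Finset.sum_apply,
    Finset.sum_mul]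
  rw [Finset.sum_comm]

lemma vecMulVec_mulVec {n : Type*} [Fintype n] (w z v : n → ℂ) :
    (Matrix.vecMulVec w z) *ᵥ v = (dotProduct z v) • w := by
  ext a
  simp [Matrix.mulVec, Matrix.vecMulVec_apply, dotProduct, Finset.mul_sum, mul_comm,
    mul_left_comm, Pi.smul_apply, smul_eq_mul]

noncomputable def psdSqrt {n : Type*} [Fintype n] [DecidableEq n] {A : Matrix n n ℂ}
    (hA : A.PosSemidef) : Matrix n n ℂ :=
  (hA.1.eigenvectorUnitary : Matrix n n ℂ) *
    Matrix.diagonal (fun i => ((Real.sqrt (hA.1.eigenvalues i) : ℝ) : ℂ)) *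
    (star hA.1.eigenvectorUnitary : Matrix n n ℂ)

lemma psdSqrt_posSemidef {n : Type*} [Fintype n] [DecidableEq n] {A : Matrix n n ℂ}
    (hA : A.PosSemidef) : (psdSqrt hA).PosSemidef := by
  unfold psdSqrt
  have hD : (Matrix.diagonal (fun i => ((Real.sqrt (hA.1.eigenvalues i) : ℝ) : ℂ))).PosSemidef := by
    rw [Matrix.posSemidef_diagonal_iff]
    intro i
    exact Complex.zero_le_real.mpr (Real.sqrt_nonneg _)
  have := hD.mul_mul_conjTranspose_same (hA.1.eigenvectorUnitary : Matrix n n ℂ)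
  rw [Matrix.star_eq_conjTranspose]
  exact this

lemma psdSqrt_mul_self {n : Type*} [Fintype n] [DecidableEq n] {A : Matrix n n ℂ}
    (hA : A.PosSemidef) : psdSqrt hA * psdSqrt hA = A := by
  unfold psdSqrt
  have hUU : (star hA.1.eigenvectorUnitary : Matrix n n ℂ) * (hA.1.eigenvectorUnitary : Matrix n n ℂ)
      = 1 := Unitary.coe_star_mul_self _
  have hE : Matrix.diagonal (fun i => ((Real.sqrt (hA.1.eigenvalues i) : ℝ) : ℂ)) *
      Matrix.diagonal (fun i => ((Real.sqrt (hA.1.eigenvalues i) : ℝ) : ℂ))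
      = Matrix.diagonal (RCLike.ofReal ∘ hA.1.eigenvalues) := by
    rw [Matrix.diagonal_mul_diagonal]
    congr 1
    ext i
    rw [Function.comp_apply, ← Complex.ofReal_mul, Real.mul_self_sqrt (hA.eigenvalues_nonneg i)]
    rfl
  calc _ = (hA.1.eigenvectorUnitary : Matrix n n ℂ) *
        (Matrix.diagonal (fun i => ((Real.sqrt (hA.1.eigenvalues i) : ℝ) : ℂ)) *
          ((star hA.1.eigenvectorUnitary : Matrix n n ℂ) * (hA.1.eigenvectorUnitary : Matrix n n ℂ)) *
          Matrix.diagonal (fun i => ((Real.sqrt (hA.1.eigenvalues i) : ℝ) : ℂ))) *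
        (star hA.1.eigenvectorUnitary : Matrix n n ℂ) := by simp only [Matrix.mul_assoc]
    _ = A := by
      rw [hUU, Matrix.mul_one, hE]
      conv_rhs => rw [hA.1.spectral_theorem]
      rw [Unitary.conjStarAlgAut_apply]

theorem traceNorm_le {n ι : Type*} [Fintype n] [DecidableEq n] [Fintype ι]
    (A : Matrix n n ℂ) (x y : ι → EuclideanSpace ℂ n)
    (hA : A = ∑ i, Matrix.vecMulVec (x i : n → ℂ) (star (y i : n → ℂ))) :
    (psdSqrt (Matrix.posSemidef_conjTranspose_mul_self A)).trace.re ≤ ∑ i, ‖x i‖ * ‖y i‖ := by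
  classical
  set S := psdSqrt (Matrix.posSemidef_conjTranspose_mul_self A) with hSdef
  have hS : S.PosSemidef := psdSqrt_posSemidef (Matrix.posSemidef_conjTranspose_mul_self A)
  have hH : S.IsHermitian := hS.1
  set μ : n → ℝ := hH.eigenvalues with hμdef
  set v : n → EuclideanSpace ℂ n := fun j => hH.eigenvectorBasis j with hvdef
  have hμ0 : ∀ j, 0 ≤ μ j := hS.eigenvalues_nonneg
  have hSv : ∀ j, S *ᵥ (v j : n → ℂ) = μ j • (v j : n → ℂ) := fun j =>
    hH.mulVec_eigenvectorBasis j
  have hSS : S * S = Aᴴ * A := psdSqrt_mul_self (Matrix.posSemidef_conjTranspose_mul_self A)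
  have hAAv : ∀ j, (Aᴴ * A) *ᵥ (v j : n → ℂ) = ((μ j : ℂ) ^ 2) • (v j : n → ℂ) := by
    intro j
    rw [← hSS, ← Matrix.mulVec_mulVec, hSv j, Matrix.mulVec_smul, hSv j, smul_smul,
      RCLike.real_smul_eq_coe_smul (K := ℂ), sq]
    push_cast
    rfl
  set Av : n → EuclideanSpace ℂ n := fun j => (WithLp.equiv 2 (n → ℂ)).symm (A *ᵥ (v j : n → ℂ))
    with hAvdef
  have hvv : ∀ j k, ⟪v j, v k⟫ = if j = k then (1:ℂ) else 0 := fun j k =>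
    orthonormal_iff_ite.mp hH.eigenvectorBasis.orthonormal j k
  have hinner : ∀ j k, ⟪Av j, Av k⟫ = (μ k : ℂ) ^ 2 * (if j = k then 1 else 0) := by
    intro j k
    have h0 : ⟪Av j, Av k⟫
        = dotProduct (star (A *ᵥ (v j : n → ℂ))) (A *ᵥ (v k : n → ℂ)) := by
      rw [EuclideanSpace.inner_eq_star_dotProduct, dotProduct_comm]; rfl
    rw [h0, Matrix.star_mulVec, ← dotProduct_mulVec, Matrix.mulVec_mulVec, hAAv k,
      dotProduct_smul, smul_eq_mul, ← hvv]
    rw [EuclideanSpace.inner_eq_star_dotProduct, dotProduct_comm]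
  have hnormAv : ∀ j, ‖Av j‖ = μ j := by
    intro j
    have h1 : (⟪Av j, Av j⟫) = (μ j : ℂ) ^ 2 := by rw [hinner j j]; simp
    have h2 : ‖Av j‖ ^ 2 = μ j ^ 2 := by
      rw [inner_self_eq_norm_sq_to_K] at h1
      norm_cast at h1
      exact RCLike.ofReal_injective (K := ℂ) h1
    have := congrArg Real.sqrt h2
    rwa [Real.sqrt_sq (norm_nonneg _), Real.sqrt_sq (hμ0 j)] at this
  set u : n → EuclideanSpace ℂ n := fun j => (((μ j)⁻¹ : ℝ) : ℂ) • Av j with hudef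
  set s : Finset n := Finset.univ.filter (fun j => μ j ≠ 0) with hsdef
  have hmem : ∀ j ∈ s, μ j ≠ 0 := fun j hj => (Finset.mem_filter.mp hj).2
  have huOrtho : Orthonormal ℂ (fun j : {j : n // j ∈ s} => u (j : n)) := by
    rw [orthonormal_iff_ite]
    rintro ⟨j, hj⟩ ⟨k, hk⟩
    have hj' := hmem j hj
    have hk' := hmem k hk
    simp only [hudef, inner_smul_left, inner_smul_right, hinner j k, Complex.conj_ofReal]
    by_cases hjk : j = k
    · subst hjk
      simp only [if_pos rfl, Subtype.mk_eq_mk, mul_one]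
      push_cast
      field_simp
    · have : (⟨j, hj⟩ : {j : n // j ∈ s}) ≠ ⟨k, hk⟩ := by simpa using hjk
      simp [hjk, this]
  -- trace = sum of eigenvalues
  have htrace : S.trace.re = ∑ j, μ j := by
    have h1 : S.trace = ∑ j, ((μ j : ℝ) : ℂ) := by
      nth_rewrite 1 [hH.spectral_theorem]
      rw [Unitary.conjStarAlgAut_apply, Matrix.trace_mul_cycle]
      rw [Unitary.coe_star_mul_self, one_mul, Matrix.trace_diagonal]
      rfl
    rw [h1]
    rw [Complex.re_sum]
    simp
  have hAv : ∀ j, Av j = ∑ i, ⟪y i, v j⟫ • x i := by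
    intro j
    have h1 : A *ᵥ (v j : n → ℂ)
        = ∑ i, (dotProduct (star (y i : n → ℂ)) (v j : n → ℂ)) • (x i : n → ℂ) := by
      rw [hA, sum_mulVec']
      exact Finset.sum_congr rfl fun i _ => vecMulVec_mulVec _ _ _
    show (WithLp.equiv 2 (n → ℂ)).symm (A *ᵥ (v j : n → ℂ)) = _
    rw [h1]
    ext a
    simp [EuclideanSpace.inner_eq_star_dotProduct, dotProduct_comm]
  have hμle : ∀ j ∈ s, μ j ≤ ∑ i, ‖⟪y i, v j⟫‖ * ‖⟪u j, x i⟫‖ := by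
    intro j hj
    have h1 : ⟪u j, Av j⟫ = ((μ j : ℝ) : ℂ) := by
      show ⟪(((μ j)⁻¹ : ℝ) : ℂ) • Av j, Av j⟫ = _
      rw [inner_smul_left, inner_self_eq_norm_sq_to_K, hnormAv j, Complex.conj_ofReal]
      have := hmem j hj
      push_cast
      field_simp
      rfl
    have h2 : ⟪u j, Av j⟫ = ∑ i, ⟪y i, v j⟫ * ⟪u j, x i⟫ := by
      rw [hAv j, inner_sum]
      exact Finset.sum_congr rfl fun i _ => by rw [inner_smul_right]
    have h3 : μ j = (∑ i, ⟪y i, v j⟫ * ⟪u j, x i⟫).re := by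
      rw [← h2, h1, Complex.ofReal_re]
    rw [h3]
    calc (∑ i, ⟪y i, v j⟫ * ⟪u j, x i⟫).re
        ≤ ‖∑ i, ⟪y i, v j⟫ * ⟪u j, x i⟫‖ := Complex.re_le_norm _
      _ ≤ ∑ i, ‖⟪y i, v j⟫ * ⟪u j, x i⟫‖ := norm_sum_le _ _
      _ = ∑ i, ‖⟪y i, v j⟫‖ * ‖⟪u j, x i⟫‖ := by
          exact Finset.sum_congr rfl fun i _ => norm_mul _ _
  have hgoal : S.trace.re ≤ ∑ i, ‖x i‖ * ‖y i‖ := by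
    rw [htrace, ← Finset.sum_filter_ne_zero Finset.univ]
    calc ∑ j ∈ s, μ j
        ≤ ∑ j ∈ s, ∑ i, ‖⟪y i, v j⟫‖ * ‖⟪u j, x i⟫‖ := Finset.sum_le_sum hμle
      _ = ∑ i, ∑ j ∈ s, ‖⟪y i, v j⟫‖ * ‖⟪u j, x i⟫‖ := Finset.sum_comm
      _ ≤ ∑ i, ‖x i‖ * ‖y i‖ := by
          refine Finset.sum_le_sum fun i _ => ?_
          have hB1 : ∑ j ∈ s, ‖⟪y i, v j⟫‖ ^ 2 ≤ ‖y i‖ ^ 2 := by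
            have h := hH.eigenvectorBasis.orthonormal.sum_inner_products_le (y i) (s := s)
            calc ∑ j ∈ s, ‖⟪y i, v j⟫‖ ^ 2
                = ∑ j ∈ s, ‖⟪v j, y i⟫‖ ^ 2 := by
                  exact Finset.sum_congr rfl fun j _ => by rw [norm_inner_symm]
              _ ≤ ‖y i‖ ^ 2 := h
          have hB2 : ∑ j ∈ s, ‖⟪u j, x i⟫‖ ^ 2 ≤ ‖x i‖ ^ 2 := by
            have h := huOrtho.sum_inner_products_le (x i) (s := (Finset.univ : Finset {j : n // j ∈ s}))
            rwa [Finset.sum_coe_sort s (fun j => ‖⟪u j, x i⟫‖ ^ 2)] at h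
          have hCS := Finset.sum_mul_sq_le_sq_mul_sq s
            (fun j => ‖⟪y i, v j⟫‖) (fun j => ‖⟪u j, x i⟫‖)
          have hnn : 0 ≤ ∑ j ∈ s, ‖⟪y i, v j⟫‖ * ‖⟪u j, x i⟫‖ :=
            Finset.sum_nonneg fun j _ => mul_nonneg (norm_nonneg _) (norm_nonneg _)
          have hsq : (∑ j ∈ s, ‖⟪y i, v j⟫‖ * ‖⟪u j, x i⟫‖) ^ 2 ≤ (‖x i‖ * ‖y i‖) ^ 2 := by
            have h1 : (0:ℝ) ≤ ∑ j ∈ s, ‖⟪y i, v j⟫‖ ^ 2 :=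
              Finset.sum_nonneg fun j _ => sq_nonneg _
            nlinarith [sq_nonneg (‖x i‖), sq_nonneg (‖y i‖)]
          calc ∑ j ∈ s, ‖⟪y i, v j⟫‖ * ‖⟪u j, x i⟫‖
              = Real.sqrt ((∑ j ∈ s, ‖⟪y i, v j⟫‖ * ‖⟪u j, x i⟫‖) ^ 2) :=
                (Real.sqrt_sq hnn).symm
            _ ≤ Real.sqrt ((‖x i‖ * ‖y i‖) ^ 2) := Real.sqrt_le_sqrt hsq
            _ = ‖x i‖ * ‖y i‖ := Real.sqrt_sq (mul_nonneg (norm_nonneg _) (norm_nonneg _))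
  exact hgoal


noncomputable def convMatrix {G : Type*} [Group G] [Fintype G] (f : G → ℂ) :
    Matrix G G ℂ := fun x y => f (x * y⁻¹) / (Fintype.card G)

/-- The algebra norm `‖f‖_{A(G)}`: sum of singular values of `g ↦ f ∗ g`. -/
noncomputable def algNorm {G : Type*} [Group G] [Fintype G] [DecidableEq G]
    (f : G → ℂ) : ℝ :=
  (let hA := (Matrix.posSemidef_conjTranspose_mul_self (convMatrix f)).1;
    ((hA.eigenvectorUnitary : Matrix G G ℂ) *
      Matrix.diagonal (fun i => ((Real.sqrt (hA.eigenvalues i) : ℝ) : ℂ)) *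
      (star hA.eigenvectorUnitary : Matrix G G ℂ))).trace.re

/-- Binary decision trees over subsets of `G`: a leaf holds an output bit; an
internal node holds a query set `W` with a subtree for `x ∈ W` and one for
`x ∉ W`. -/
inductive DTree (G : Type*) where
  | leaf : Bool → DTree G
  | node : Set G → DTree G → DTree G → DTree G

namespace DTree

noncomputable def eval {G : Type*} : DTree G → G → Bool
  | leaf b, _ => b
  | node W t1 t0, x => if x ∈ W then t1.eval x else t0.eval x

def leaves {G : Type*} : DTree G → ℕ
  | leaf _ => 1
  | node _ t1 t0 => t1.leaves + t0.leaves

/-- A coset decision tree: every query set is a (left) coset of a subgroup. -/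
def IsCosetTree {G : Type*} [Group G] : DTree G → Prop
  | leaf _ => True
  | node W t1 t0 =>
      (∃ (g : G) (H : Subgroup G), W = g • (H : Set G)) ∧
        IsCosetTree t1 ∧ IsCosetTree t0

end DTree

set_option linter.unusedSectionVars false

noncomputable def cInd {G : Type*} [Group G] (g : G) (H : Subgroup G) (x : G) : ℂ :=
  if x ∈ g • (H : Set G) then 1 else 0

noncomputable def evalL {G : Type*} [Group G] (L : List (ℂ × G × Subgroup G)) (x : G) : ℂ :=
  (L.map fun p => p.1 * cInd p.2.1 p.2.2 x).sum

section Lemmas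
variable {G : Type*} [Group G] [Fintype G] [DecidableEq G]

lemma sum_ind_coset (g y₀ : G) (H : Subgroup G) :
    ∑ a : G, (if a * y₀⁻¹ ∈ g • (H : Set G) then (1:ℝ) else 0) = Fintype.card H := by
  rw [← Equiv.sum_comp ((Equiv.mulLeft g).trans (Equiv.mulRight y₀))
    (fun a => if a * y₀⁻¹ ∈ g • (H : Set G) then (1:ℝ) else 0)]
  have h1 : ∀ h : G, ((Equiv.mulLeft g).trans (Equiv.mulRight y₀)) h * y₀⁻¹ ∈ g • (H : Set G)
      ↔ h ∈ H := by
    intro h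
    simp only [Equiv.trans_apply, Equiv.coe_mulLeft, Equiv.coe_mulRight, mul_inv_cancel_right,
      mem_leftCoset_iff, inv_mul_cancel_left, SetLike.mem_coe]
  rw [Finset.sum_congr rfl fun h _ => by rw [if_congr (h1 h) rfl rfl]]
  rw [Finset.sum_boole]
  simp [Fintype.card_subtype]

lemma key_sum (g : G) (H : Subgroup G) (a b : G) :
    ∑ y₀ : G, cInd g H (a * y₀⁻¹) * cInd 1 H (b * y₀⁻¹)
      = (Fintype.card H : ℂ) * cInd g H (a * b⁻¹) := by
  rw [← Equiv.sum_comp (Equiv.mulRight b)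
    (fun y₀ => cInd g H (a * y₀⁻¹) * cInd 1 H (b * y₀⁻¹))]
  have h1 : ∀ h : G, cInd 1 H (b * ((Equiv.mulRight b) h)⁻¹) = if h ∈ H then (1:ℂ) else 0 := by
    intro h
    simp only [Equiv.coe_mulRight, cInd, _root_.mul_inv_rev, mem_leftCoset_iff]
    congr 1
    simp [mul_assoc, inv_mem_iff]
  have h2 : ∀ h : G, h ∈ H → cInd g H (a * ((Equiv.mulRight b) h)⁻¹) = cInd g H (a * b⁻¹) := by
    intro h hh
    simp only [Equiv.coe_mulRight, cInd, _root_.mul_inv_rev, mem_leftCoset_iff]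
    congr 1
    rw [show g⁻¹ * (a * (b⁻¹ * h⁻¹)) = (g⁻¹ * (a * b⁻¹)) * h⁻¹ by group]
    simp [mul_mem_cancel_right (inv_mem hh)]
  have h3 : ∀ h : G, cInd g H (a * ((Equiv.mulRight b) h)⁻¹) * cInd 1 H (b * ((Equiv.mulRight b) h)⁻¹)
      = if h ∈ H then cInd g H (a * b⁻¹) else 0 := by
    intro h
    rw [h1 h]
    by_cases hh : h ∈ H
    · rw [if_pos hh, mul_one, h2 h hh, if_pos hh]
    · rw [if_neg hh, mul_zero, if_neg hh]
  rw [Finset.sum_congr rfl fun h _ => h3 h]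
  rw [Finset.sum_ite, Finset.sum_const, Finset.sum_const_zero, add_zero, nsmul_eq_mul]
  congr 2
  rw [Fintype.card_subtype]

end Lemmas
section Part2
variable {G : Type*} [Group G] [Fintype G] [DecidableEq G]

lemma norm_indvec (c : ℂ) (g y₀ : G) (H : Subgroup G) :
    ‖((WithLp.equiv 2 (G → ℂ)).symm (fun a => c * cInd g H (a * y₀⁻¹)) : EuclideanSpace ℂ G)‖
      = ‖c‖ * Real.sqrt (Fintype.card H) := by
  rw [EuclideanSpace.norm_eq]
  have h : ∀ a : G, ‖((WithLp.equiv 2 (G → ℂ)).symm fun a => c * cInd g H (a * y₀⁻¹)) a‖ ^ 2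
      = ‖c‖ ^ 2 * (if a * y₀⁻¹ ∈ g • (H : Set G) then (1:ℝ) else 0) := by
    intro a
    show ‖c * cInd g H (a * y₀⁻¹)‖ ^ 2 = _
    rw [cInd]
    split <;> simp
  rw [Finset.sum_congr rfl fun a _ => h a, ← Finset.mul_sum, sum_ind_coset,
    Real.sqrt_mul (sq_nonneg _), Real.sqrt_sq (norm_nonneg _)]

theorem algNorm_evalL_le (L : List (ℂ × G × Subgroup G))
    (hc : ∀ p ∈ L, ‖p.1‖ ≤ 1) : algNorm (evalL L) ≤ L.length := by
  classical
  set n : ℝ := (Fintype.card G : ℝ) with hn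
  have hn0 : (0:ℝ) < n := by
    rw [hn]
    exact_mod_cast Fintype.card_pos
  set X : Fin L.length × G → EuclideanSpace ℂ G := fun q =>
    (WithLp.equiv 2 (G → ℂ)).symm fun a =>
      ((L.get q.1).1 / ((Fintype.card G : ℂ) * (Fintype.card (L.get q.1).2.2 : ℂ)))
        * cInd (L.get q.1).2.1 (L.get q.1).2.2 (a * q.2⁻¹) with hX
  set Y : Fin L.length × G → EuclideanSpace ℂ G := fun q =>
    (WithLp.equiv 2 (G → ℂ)).symm fun b => (1:ℂ) * cInd 1 (L.get q.1).2.2 (b * q.2⁻¹) with hY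
  have hcardG : ((Fintype.card G : ℂ)) ≠ 0 := Nat.cast_ne_zero.mpr Fintype.card_ne_zero
  have hdecomp : convMatrix (evalL L)
      = ∑ q : Fin L.length × G, Matrix.vecMulVec (X q : G → ℂ) (star (Y q : G → ℂ)) := by
    ext a b
    rw [Matrix.sum_apply, Fintype.sum_prod_type]
    have hterm : ∀ (k : Fin L.length),
        ∑ y₀ : G, Matrix.vecMulVec (X (k, y₀) : G → ℂ) (star (Y (k, y₀) : G → ℂ)) a b
          = (L.get k).1 * cInd (L.get k).2.1 (L.get k).2.2 (a * b⁻¹) / (Fintype.card G : ℂ) := by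
      intro k
      have hcard : ((Fintype.card (L.get k).2.2 : ℂ)) ≠ 0 :=
        Nat.cast_ne_zero.mpr Fintype.card_ne_zero
      have step : ∀ y₀ : G, Matrix.vecMulVec (X (k, y₀) : G → ℂ) (star (Y (k, y₀) : G → ℂ)) a b
          = ((L.get k).1 / ((Fintype.card G : ℂ) * (Fintype.card (L.get k).2.2 : ℂ)))
            * (cInd (L.get k).2.1 (L.get k).2.2 (a * y₀⁻¹) * cInd 1 (L.get k).2.2 (b * y₀⁻¹)) := by
        intro y₀
        rw [Matrix.vecMulVec_apply]
        show (((L.get k).1 / ((Fintype.card G : ℂ) * (Fintype.card (L.get k).2.2 : ℂ)))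
            * cInd (L.get k).2.1 (L.get k).2.2 (a * y₀⁻¹))
            * star ((1:ℂ) * cInd 1 (L.get k).2.2 (b * y₀⁻¹)) = _
        have hstar : star ((1:ℂ) * cInd 1 (L.get k).2.2 (b * y₀⁻¹))
            = cInd 1 (L.get k).2.2 (b * y₀⁻¹) := by
          rw [one_mul, cInd]
          split <;> simp
        rw [hstar]
        ring
      rw [Finset.sum_congr rfl fun y₀ _ => step y₀, ← Finset.mul_sum, key_sum]
      field_simp
    rw [Finset.sum_congr rfl fun k _ => hterm k]
    show evalL L (a * b⁻¹) / (Fintype.card G : ℂ) = _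
    rw [evalL, ← Fin.sum_univ_fun_getElem L (fun p => p.1 * cInd p.2.1 p.2.2 (a * b⁻¹)), Finset.sum_div]
    exact Finset.sum_congr rfl fun k _ => by rw [List.get_eq_getElem]
  have hXnorm : ∀ q : Fin L.length × G, ‖X q‖ * ‖Y q‖ ≤ 1 / n := by
    rintro ⟨k, y₀⟩
    have hcardpos : (0:ℝ) < (Fintype.card (L.get k).2.2 : ℝ) := by exact_mod_cast Fintype.card_pos
    have hXn : ‖X (k, y₀)‖ = ‖(L.get k).1 / ((Fintype.card G : ℂ)
        * (Fintype.card (L.get k).2.2 : ℂ))‖ * Real.sqrt (Fintype.card (L.get k).2.2) :=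
      norm_indvec _ _ _ _
    have hYn : ‖Y (k, y₀)‖ = Real.sqrt (Fintype.card (L.get k).2.2) := by
      rw [show ‖Y (k, y₀)‖ = ‖(1:ℂ)‖ * Real.sqrt (Fintype.card (L.get k).2.2) from
        norm_indvec _ _ _ _]
      simp
    rw [hXn, hYn, mul_assoc, Real.mul_self_sqrt (le_of_lt hcardpos)]
    have hε : ‖(L.get k).1‖ ≤ 1 := hc _ (L.get_mem k)
    have h1 : ‖((Fintype.card G : ℂ) * (Fintype.card (L.get k).2.2 : ℂ))‖
        = n * (Fintype.card (L.get k).2.2 : ℝ) := by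
      rw [norm_mul, hn]
      simp
    have hcnorm : ‖(L.get k).1 / ((Fintype.card G : ℂ) * (Fintype.card (L.get k).2.2 : ℂ))‖
        ≤ 1 / (n * (Fintype.card (L.get k).2.2 : ℝ)) := by
      rw [norm_div, h1]
      gcongr
    calc ‖(L.get k).1 / ((Fintype.card G : ℂ) * (Fintype.card (L.get k).2.2 : ℂ))‖
          * (Fintype.card (L.get k).2.2 : ℝ)
        ≤ (1 / (n * (Fintype.card (L.get k).2.2 : ℝ))) * (Fintype.card (L.get k).2.2 : ℝ) := by
          gcongr
      _ = 1 / n := by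
          field_simp
  have h2 : algNorm (evalL L) ≤ ∑ q : Fin L.length × G, ‖X q‖ * ‖Y q‖ :=
    traceNorm_le (convMatrix (evalL L)) X Y hdecomp
  refine h2.trans ?_
  calc ∑ q : Fin L.length × G, ‖X q‖ * ‖Y q‖
      ≤ ∑ _q : Fin L.length × G, 1 / n := Finset.sum_le_sum fun q _ => hXnorm q
    _ = (L.length : ℝ) := by
      rw [Finset.sum_const, Finset.card_univ, nsmul_eq_mul]
      rw [Fintype.card_prod, Fintype.card_fin]
      push_cast [hn]
      field_simp

end Part2

section Part3
variable {G : Type*} [Group G]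

lemma mem_coset_trans {g c x : G} {H : Subgroup G} (hc : g⁻¹ * c ∈ H) :
    g⁻¹ * x ∈ H ↔ c⁻¹ * x ∈ H := by
  constructor
  · intro hx
    have h2 := mul_mem (inv_mem hc) hx
    rwa [show (g⁻¹ * c)⁻¹ * (g⁻¹ * x) = c⁻¹ * x by group] at h2
  · intro hx
    have h2 := mul_mem hc hx
    rwa [show (g⁻¹ * c) * (c⁻¹ * x) = g⁻¹ * x by group] at h2

lemma coset_inter {g g' c : G} {H H' : Subgroup G}
    (hc : c ∈ g • (H : Set G) ∩ g' • (H' : Set G)) :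
    g • (H : Set G) ∩ g' • (H' : Set G) = c • ((H ⊓ H' : Subgroup G) : Set G) := by
  obtain ⟨hcH, hcH'⟩ := hc
  rw [mem_leftCoset_iff, SetLike.mem_coe] at hcH hcH'
  ext x
  simp only [Set.mem_inter_iff, mem_leftCoset_iff, SetLike.mem_coe, Subgroup.mem_inf]
  rw [mem_coset_trans hcH, mem_coset_trans hcH']

noncomputable def negL (L : List (ℂ × G × Subgroup G)) : List (ℂ × G × Subgroup G) :=
  L.map fun p => (-p.1, p.2)

noncomputable def mulC (g : G) (H : Subgroup G) (L : List (ℂ × G × Subgroup G)) :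
    List (ℂ × G × Subgroup G) :=
  L.filterMap fun p =>
    if h : (g • (H : Set G) ∩ p.2.1 • (p.2.2 : Set G)).Nonempty then
      some (p.1, h.some, H ⊓ p.2.2) else none

lemma evalL_nil (x : G) : evalL ([] : List (ℂ × G × Subgroup G)) x = 0 := rfl

lemma evalL_cons (p : ℂ × G × Subgroup G) (L : List (ℂ × G × Subgroup G)) (x : G) :
    evalL (p :: L) x = p.1 * cInd p.2.1 p.2.2 x + evalL L x := by
  simp [evalL]

lemma evalL_append (L1 L2 : List (ℂ × G × Subgroup G)) (x : G) :
    evalL (L1 ++ L2) x = evalL L1 x + evalL L2 x := by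
  simp [evalL]

lemma evalL_negL (L : List (ℂ × G × Subgroup G)) (x : G) :
    evalL (negL L) x = - evalL L x := by
  induction L with
  | nil => simp [negL, evalL]
  | cons p L ih =>
    rw [show negL (p :: L) = (-p.1, p.2) :: negL L from rfl, evalL_cons, evalL_cons, ih]
    ring

lemma cInd_mul (g g' x : G) (H H' : Subgroup G) :
    cInd g H x * cInd g' H' x =
      if h : (g • (H : Set G) ∩ g' • (H' : Set G)).Nonempty then
        cInd h.some (H ⊓ H') x else 0 := by
  by_cases h : (g • (H : Set G) ∩ g' • (H' : Set G)).Nonempty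
  · rw [dif_pos h]
    have hiff : x ∈ h.some • ((H ⊓ H' : Subgroup G) : Set G)
        ↔ (x ∈ g • (H : Set G) ∧ x ∈ g' • (H' : Set G)) := by
      rw [← coset_inter h.some_mem]
      exact Set.mem_inter_iff _ _ _
    simp only [cInd]
    by_cases h1 : x ∈ g • (H : Set G) <;> by_cases h2 : x ∈ g' • (H' : Set G)
    · rw [if_pos h1, if_pos h2, if_pos (hiff.mpr ⟨h1, h2⟩), one_mul]
    · rw [if_pos h1, if_neg h2, if_neg (fun hx => h2 (hiff.mp hx).2), mul_zero]
    · rw [if_neg h1, if_pos h2, if_neg (fun hx => h1 (hiff.mp hx).1), zero_mul]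
    · rw [if_neg h1, if_neg h2, if_neg (fun hx => h1 (hiff.mp hx).1), zero_mul]
  · rw [dif_neg h]
    have hx : ¬(x ∈ g • (H : Set G) ∧ x ∈ g' • (H' : Set G)) := fun hx => h ⟨x, hx.1, hx.2⟩
    simp only [cInd]
    by_cases h1 : x ∈ g • (H : Set G) <;> by_cases h2 : x ∈ g' • (H' : Set G) <;>
      simp [h1, h2] <;> tauto

lemma evalL_mulC (g : G) (H : Subgroup G) (L : List (ℂ × G × Subgroup G)) (x : G) :
    evalL (mulC g H L) x = cInd g H x * evalL L x := by
  induction L with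
  | nil => simp [mulC, evalL]
  | cons p L ih =>
    rw [mulC, List.filterMap_cons]
    by_cases h : (g • (H : Set G) ∩ p.2.1 • (p.2.2 : Set G)).Nonempty
    · rw [dif_pos h]
      rw [show mulC g H L = L.filterMap _ from rfl] at ih
      rw [evalL_cons, ih, evalL_cons]
      have := cInd_mul g p.2.1 x H p.2.2
      rw [dif_pos h] at this
      show p.1 * cInd h.some (H ⊓ p.2.2) x + _ = _
      rw [← this]
      ring
    · rw [dif_neg h]
      rw [show mulC g H L = L.filterMap _ from rfl] at ih
      rw [ih, evalL_cons]
      have := cInd_mul g p.2.1 x H p.2.2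
      rw [dif_neg h] at this
      rw [mul_add, show cInd g H x * (p.1 * cInd p.2.1 p.2.2 x)
        = p.1 * (cInd g H x * cInd p.2.1 p.2.2 x) by ring, this, mul_zero, zero_add]

lemma mulC_coeff {g : G} {H : Subgroup G} {L : List (ℂ × G × Subgroup G)}
    (hc : ∀ p ∈ L, ‖p.1‖ ≤ 1) : ∀ p ∈ mulC g H L, ‖p.1‖ ≤ 1 := by
  intro p hp
  rw [mulC, List.mem_filterMap] at hp
  obtain ⟨q, hq, hfq⟩ := hp
  by_cases h : (g • (H : Set G) ∩ q.2.1 • (q.2.2 : Set G)).Nonempty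
  · rw [dif_pos h] at hfq
    obtain rfl := (Option.some_inj.mp hfq).symm
    simpa using hc q hq
  · rw [dif_neg h] at hfq
    simp at hfq

lemma leaves_pos (T : DTree G) : 1 ≤ T.leaves := by
  induction T with
  | leaf b => simp [DTree.leaves]
  | node W t1 t0 ih1 ih0 => simp only [DTree.leaves]; omega

lemma exists_list (T : DTree G) : T.IsCosetTree →
    ∃ L : List (ℂ × G × Subgroup G), (∀ p ∈ L, ‖p.1‖ ≤ 1) ∧ L.length + 1 ≤ 2 ^ T.leaves ∧
      ∀ x, (if T.eval x then (1:ℂ) else 0) = evalL L x := by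
  induction T with
  | leaf b =>
    intro _
    cases b
    · exact ⟨[], by simp, by simp [DTree.leaves], fun x => by simp [DTree.eval, evalL_nil]⟩
    · refine ⟨[((1:ℂ), (1:G), (⊤ : Subgroup G))], by simp, by simp [DTree.leaves], fun x => ?_⟩
      rw [show evalL [((1:ℂ), (1:G), (⊤ : Subgroup G))] x
        = 1 * cInd 1 ⊤ x + 0 from rfl]
      simp [DTree.eval, cInd, mem_leftCoset_iff]
  | node W t1 t0 ih1 ih0 =>
    intro hT
    obtain ⟨⟨g, H, rfl⟩, h1, h0⟩ := hT
    obtain ⟨L1, hc1, hl1, he1⟩ := ih1 h1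
    obtain ⟨L0, hc0, hl0, he0⟩ := ih0 h0
    refine ⟨mulC g H L1 ++ (L0 ++ negL (mulC g H L0)), ?_, ?_, ?_⟩
    · intro p hp
      rw [List.mem_append, List.mem_append] at hp
      rcases hp with hp | hp | hp
      · exact mulC_coeff hc1 p hp
      · exact hc0 p hp
      · rw [negL, List.mem_map] at hp
        obtain ⟨q, hq, rfl⟩ := hp
        simpa using mulC_coeff hc0 q hq
    · have e1 : (mulC g H L1).length ≤ L1.length := List.length_filterMap_le _ _
      have e0 : (mulC g H L0).length ≤ L0.length := List.length_filterMap_le _ _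
      have e0' : (negL (mulC g H L0)).length = (mulC g H L0).length := List.length_map _
      have hA : 2 ≤ 2 ^ t1.leaves := by
        calc (2:ℕ) = 2 ^ 1 := rfl
        _ ≤ 2 ^ t1.leaves := Nat.pow_le_pow_right (by norm_num) (leaves_pos t1)
      have hB : 2 ≤ 2 ^ t0.leaves := by
        calc (2:ℕ) = 2 ^ 1 := rfl
        _ ≤ 2 ^ t0.leaves := Nat.pow_le_pow_right (by norm_num) (leaves_pos t0)
      have key : 2 ^ t1.leaves + 2 * 2 ^ t0.leaves ≤ 2 ^ t1.leaves * 2 ^ t0.leaves + 2 := by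
        nlinarith
      rw [DTree.leaves, pow_add]
      rw [List.length_append, List.length_append, e0']
      linarith
    · intro x
      rw [evalL_append, evalL_append, evalL_mulC, evalL_negL, evalL_mulC]
      rw [DTree.eval]
      by_cases hx : x ∈ g • (H : Set G)
      · rw [if_pos hx, show cInd g H x = 1 from if_pos hx, ← he1 x]
        ring
      · rw [if_neg hx, show cInd g H x = 0 from if_neg hx, ← he0 x]
        ring

end Part3

/-- A Boolean function computed by a coset decision tree with `m` leaves has
algebra norm at most `m·2^m`. -/
theorem algNorm_le_of_cosetTree {G : Type*} [Group G] [Fintype G] [DecidableEq G]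
    (f : G → ℂ) (T : DTree G) (hT : T.IsCosetTree)
    (hf : ∀ x, f x = if T.eval x then 1 else 0) :
    algNorm f ≤ T.leaves * 2 ^ T.leaves := by
  obtain ⟨L, hc, hl, he⟩ := exists_list T hT
  have hf' : f = evalL L := funext fun x => by rw [hf x]; exact he x
  have h1 : algNorm f ≤ L.length := by rw [hf']; exact algNorm_evalL_le L hc
  refine h1.trans ?_
  have hm : 1 ≤ T.leaves := leaves_pos T
  have h2 : (L.length : ℝ) + 1 ≤ (2:ℝ) ^ T.leaves := by exact_mod_cast hl
  have hm' : (1:ℝ) ≤ (T.leaves : ℝ) := by exact_mod_cast hm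
  have h3 : (2:ℝ) ^ T.leaves ≤ (T.leaves : ℝ) * 2 ^ T.leaves :=
    le_mul_of_one_le_left (by positivity) hm'
  linarith
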